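/- For two colors (black/red) and a deck of n cards with b black cards dealt into ℓ hands of size s (n = ℓs), given a hand ω = (b_1,...,b_ℓ) with Σ b_j = b and 0 ≤ b_j ≤ s, the sum of Z(D',B,R) over all arrangements D' realizing hand ω under dealing method f equals ∏_{j=1}^{ℓ} C(s, b_j) · Σ_{i=1}^{ℓ} b_i (n + 1 - (2/s) Σ_{t=1}^{s} i_t), where i_t is the t-th position of player i. -/

import Mathlib

open Finset

open scoped Classical

/-- Signed count of black-red pairs minus red-black pairs for a two-coloured deck
(`true` = black, `false` = red). -/
def Zbool {n : ℕ} (D : Fin n → Bool) : ℤ :=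
  ((univ.filter fun p : Fin n × Fin n =>
      p.1 < p.2 ∧ D p.1 = true ∧ D p.2 = false).card : ℤ)
  - ((univ.filter fun p : Fin n × Fin n =>
      p.1 < p.2 ∧ D p.1 = false ∧ D p.2 = true).card : ℤ)

lemma Zbool_eq {n : ℕ} (D : Fin n → Bool) :
    (Zbool D : ℚ) = ∑ t : Fin n, (if D t = true then ((n:ℚ) + 1 - 2*(((t:ℕ):ℚ)+1)) else 0) := by
  have h1 : ((univ.filter fun p : Fin n × Fin n =>
      p.1 < p.2 ∧ D p.1 = true ∧ D p.2 = false).card : ℚ)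
      = ∑ p : Fin n, ∑ q : Fin n, (if p < q ∧ D p = true ∧ D q = false then (1:ℚ) else 0) := by
    rw [Finset.card_filter]
    push_cast
    rw [Fintype.sum_prod_type]
  have h2 : ((univ.filter fun p : Fin n × Fin n =>
      p.1 < p.2 ∧ D p.1 = false ∧ D p.2 = true).card : ℚ)
      = ∑ p : Fin n, ∑ q : Fin n, (if p < q ∧ D p = false ∧ D q = true then (1:ℚ) else 0) := by
    rw [Finset.card_filter]
    push_cast
    rw [Fintype.sum_prod_type]
  have hZ : (Zbool D : ℚ) = ∑ p : Fin n, ∑ q : Fin n,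
      ((if p < q then (if D p = true then (1:ℚ) else 0) else 0)
       - (if p < q then (if D q = true then (1:ℚ) else 0) else 0)) := by
    rw [Zbool]
    push_cast
    rw [h1, h2, ← Finset.sum_sub_distrib]
    refine Finset.sum_congr rfl fun p _ => ?_
    rw [← Finset.sum_sub_distrib]
    refine Finset.sum_congr rfl fun q _ => ?_
    by_cases h : p < q <;> cases hp : D p <;> cases hq : D q <;> simp [h, hp, hq]
  rw [hZ]
  have hsplit : ∀ p : Fin n, ∑ q : Fin n,
      ((if p < q then (if D p = true then (1:ℚ) else 0) else 0)
       - (if p < q then (if D q = true then (1:ℚ) else 0) else 0))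
      = (∑ q : Fin n, (if p < q then (if D p = true then (1:ℚ) else 0) else 0))
        - ∑ q : Fin n, (if p < q then (if D q = true then (1:ℚ) else 0) else 0) := by
    intro p; rw [Finset.sum_sub_distrib]
  simp only [hsplit]
  rw [Finset.sum_sub_distrib]
  have hA : ∀ p : Fin n, (∑ q : Fin n, (if p < q then (if D p = true then (1:ℚ) else 0) else 0))
      = (if D p = true then (1:ℚ) else 0) * ((Ioi p).card : ℚ) := by
    intro p
    have : (Ioi p : Finset (Fin n)) = univ.filter (fun q => p < q) := by ext q; simp
    rw [this, ← Finset.sum_filter, Finset.sum_const, nsmul_eq_mul, mul_comm]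
  have hB : (∑ p : Fin n, ∑ q : Fin n, (if p < q then (if D q = true then (1:ℚ) else 0) else 0))
      = ∑ q : Fin n, (if D q = true then (1:ℚ) else 0) * ((Iio q).card : ℚ) := by
    rw [Finset.sum_comm]
    refine Finset.sum_congr rfl fun q _ => ?_
    have : (Iio q : Finset (Fin n)) = univ.filter (fun p => p < q) := by ext p; simp
    rw [this, ← Finset.sum_filter, Finset.sum_const, nsmul_eq_mul, mul_comm]
  simp only [hA]
  rw [hB, ← Finset.sum_sub_distrib]
  refine Finset.sum_congr rfl fun p _ => ?_
  rw [Fin.card_Ioi, Fin.card_Iio]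
  have hp : (p : ℕ) < n := p.isLt
  cases hD : D p
  · simp
  · simp only [if_true, one_mul]
    have : ((n - 1 - (p:ℕ) : ℕ) : ℚ) = (n:ℚ) - 1 - (p:ℕ) := by
      have : 1 + (p:ℕ) ≤ n := by omega
      push_cast [Nat.sub_sub, Nat.cast_sub this]
      ring
    rw [this]
    ring

lemma card_hand (n ℓ s : ℕ) (f : Fin n → ℕ) (hran : ∀ t, f t ∈ Icc 1 ℓ)
    (hfib : ∀ j ∈ Icc 1 ℓ, (univ.filter fun t => f t = j).card = s)
    (b : ℕ → ℕ) :
    (univ.filter (fun D' : Fin n → Bool =>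
        ∀ j ∈ Icc 1 ℓ, (univ.filter fun t => D' t = true ∧ f t = j).card = b j)).card
      = ∏ j ∈ Icc 1 ℓ, Nat.choose s (b j) := by
  classical
  have hset : ∀ (F : Π j : (Icc 1 ℓ : Finset ℕ),
      {S : Finset (Fin n) // S ⊆ univ.filter (fun t => f t = (j:ℕ)) ∧ S.card = b (j:ℕ)})
      (j : ℕ) (hj : j ∈ Icc 1 ℓ),
      (univ.filter fun t => (decide (t ∈ (F ⟨f t, hran t⟩).1)) = true ∧ f t = j)
        = (F ⟨j, hj⟩).1 := by
    intro F j hj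
    ext t
    simp only [mem_filter, mem_univ, true_and, decide_eq_true_eq]
    constructor
    · rintro ⟨ht, hft⟩
      have h : (⟨f t, hran t⟩ : (Icc 1 ℓ : Finset ℕ)) = ⟨j, hj⟩ := Subtype.ext hft
      have h2 := congrArg (fun x => (F x).1) h
      simp only at h2
      rwa [h2] at ht
    · intro ht
      have hft : f t = j := by
        have := (F ⟨j, hj⟩).2.1 ht
        simpa using this
      have h : (⟨f t, hran t⟩ : (Icc 1 ℓ : Finset ℕ)) = ⟨j, hj⟩ := Subtype.ext hft
      have h2 := congrArg (fun x => (F x).1) h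
      simp only at h2
      rw [h2]
      exact ⟨ht, hft⟩
  let e : {D' : Fin n → Bool // ∀ j ∈ Icc 1 ℓ,
      (univ.filter fun t => D' t = true ∧ f t = j).card = b j}
      ≃ (Π j : (Icc 1 ℓ : Finset ℕ),
          {S : Finset (Fin n) // S ⊆ univ.filter (fun t => f t = (j:ℕ)) ∧ S.card = b (j:ℕ)}) :=
  { toFun := fun D j => ⟨univ.filter (fun t => D.1 t = true ∧ f t = (j:ℕ)),
      ⟨by
        intro t ht
        simp only [mem_filter, mem_univ, true_and] at ht ⊢
        exact ht.2,
       D.2 j j.2⟩⟩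
    invFun := fun F => ⟨fun t => decide (t ∈ (F ⟨f t, hran t⟩).1),
      by
        intro j hj
        rw [hset F j hj]
        exact (F ⟨j, hj⟩).2.2⟩
    left_inv := by
      intro D
      apply Subtype.ext
      funext t
      simp only []
      have : (univ.filter fun u => D.1 u = true ∧ f u = f t) = univ.filter fun u => D.1 u = true ∧ f u = f t := rfl
      by_cases h : D.1 t = true
      · simp [h]
      · simp [h]
    right_inv := by
      intro F
      funext j
      apply Subtype.ext
      simpa using hset F j.1 j.2 }
  have key : Fintype.card {D' : Fin n → Bool // ∀ j ∈ Icc 1 ℓ,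
      (univ.filter fun t => D' t = true ∧ f t = j).card = b j}
      = ∏ j ∈ Icc 1 ℓ, Nat.choose s (b j) := by
    refine Eq.trans ?_ ((Fintype.card_congr e).trans ?_)
    · congr!
    rw [Fintype.card_pi]
    rw [← Finset.prod_coe_sort (Icc 1 ℓ) (fun j => Nat.choose s (b j))]
    refine Finset.prod_congr rfl fun j _ => ?_
    rw [Fintype.card_subtype]
    have : (univ.filter fun S : Finset (Fin n) =>
        S ⊆ univ.filter (fun t => f t = (j:ℕ)) ∧ S.card = b (j:ℕ))
        = (univ.filter (fun t => f t = (j:ℕ))).powersetCard (b (j:ℕ)) := by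
      ext S
      simp [Finset.mem_powersetCard]
    rw [this, Finset.card_powersetCard, hfib j j.2]
  rw [← key, Fintype.card_subtype]
  congr!

lemma swap_count (n ℓ : ℕ) (f : Fin n → ℕ) (b : ℕ → ℕ) (t t' : Fin n) (htt' : f t = f t') :
    ((univ.filter fun D' : Fin n → Bool =>
        (∀ j ∈ Icc 1 ℓ, (univ.filter fun u => D' u = true ∧ f u = j).card = b j)
          ∧ D' t = true)).card
    = ((univ.filter fun D' : Fin n → Bool =>
        (∀ j ∈ Icc 1 ℓ, (univ.filter fun u => D' u = true ∧ f u = j).card = b j)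
          ∧ D' t' = true)).card := by
  classical
  set σ := Equiv.swap t t' with hσ
  have hfσ : ∀ u, f (σ u) = f u := by
    intro u
    rcases eq_or_ne u t with rfl | h1
    · rw [hσ, Equiv.swap_apply_left, ← htt']
    rcases eq_or_ne u t' with rfl | h2
    · rw [hσ, Equiv.swap_apply_right, htt']
    · rw [hσ, Equiv.swap_apply_of_ne_of_ne h1 h2]
  have hσσ : ∀ D' : Fin n → Bool, (fun u => D' (σ (σ u))) = D' := by
    intro D'; funext u; rw [hσ, Equiv.swap_apply_self]
  have hcard : ∀ (D' : Fin n → Bool) (j : ℕ),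
      (univ.filter fun u => D' (σ u) = true ∧ f u = j).card
      = (univ.filter fun u => D' u = true ∧ f u = j).card := by
    intro D' j
    refine Finset.card_bij (fun u _ => σ u) ?_ ?_ ?_
    · intro u hu
      simp only [mem_filter, mem_univ, true_and] at hu ⊢
      exact ⟨hu.1, (hfσ u) ▸ hu.2⟩
    · intro u _ v _ h
      exact σ.injective h
    · intro u hu
      simp only [mem_filter, mem_univ, true_and] at hu
      refine ⟨σ.symm u, ?_, by simp⟩
      simp only [mem_filter, mem_univ, true_and]
      have h1 : σ (σ.symm u) = u := Equiv.apply_symm_apply σ u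
      constructor
      · rw [h1]; exact hu.1
      · have h2 := hfσ (σ.symm u)
        rw [h1] at h2
        rw [← h2]; exact hu.2
  refine Finset.card_bij' (fun D' _ => fun u => D' (σ u)) (fun D' _ => fun u => D' (σ u))
    ?_ ?_ ?_ ?_
  · intro D' hD'
    simp only [mem_filter, mem_univ, true_and] at hD' ⊢
    refine ⟨fun j hj => by rw [hcard D' j]; exact hD'.1 j hj, ?_⟩
    have : σ t' = t := Equiv.swap_apply_right t t'
    rw [this]; exact hD'.2
  · intro D' hD'
    simp only [mem_filter, mem_univ, true_and] at hD' ⊢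
    refine ⟨fun j hj => by rw [hcard D' j]; exact hD'.1 j hj, ?_⟩
    have : σ t = t' := Equiv.swap_apply_left t t'
    rw [this]; exact hD'.2
  · intro D' _; exact hσσ D'
  · intro D' _; exact hσσ D'

lemma N_formula (n ℓ s : ℕ) (f : Fin n → ℕ) (b : ℕ → ℕ) (i : ℕ) (hi : i ∈ Icc 1 ℓ)
    (hfib : (univ.filter fun u => f u = i).card = s)
    (t : Fin n) (ht : f t = i) :
    s * ((univ.filter fun D' : Fin n → Bool =>
        (∀ j ∈ Icc 1 ℓ, (univ.filter fun u => D' u = true ∧ f u = j).card = b j)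
          ∧ D' t = true)).card
    = b i * ((univ.filter fun D' : Fin n → Bool =>
        ∀ j ∈ Icc 1 ℓ, (univ.filter fun u => D' u = true ∧ f u = j).card = b j)).card := by
  classical
  set H : Finset (Fin n → Bool) := univ.filter (fun D' : Fin n → Bool =>
      ∀ j ∈ Icc 1 ℓ, (univ.filter fun u => D' u = true ∧ f u = j).card = b j) with hH
  have key : ∑ t' ∈ univ.filter (fun u => f u = i),
      ((univ.filter fun D' : Fin n → Bool =>
        (∀ j ∈ Icc 1 ℓ, (univ.filter fun u => D' u = true ∧ f u = j).card = b j)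
          ∧ D' t' = true)).card
      = H.card * b i := by
    have inner : ∀ t' : Fin n,
        ((univ.filter fun D' : Fin n → Bool =>
          (∀ j ∈ Icc 1 ℓ, (univ.filter fun u => D' u = true ∧ f u = j).card = b j)
            ∧ D' t' = true)).card
        = ∑ D' ∈ H, (if D' t' = true then 1 else 0) := by
      intro t'
      rw [hH, ← Finset.filter_filter, Finset.card_filter]
    calc ∑ t' ∈ univ.filter (fun u => f u = i),
          ((univ.filter fun D' : Fin n → Bool =>
            (∀ j ∈ Icc 1 ℓ, (univ.filter fun u => D' u = true ∧ f u = j).card = b j)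
              ∧ D' t' = true)).card
        = ∑ t' ∈ univ.filter (fun u => f u = i), ∑ D' ∈ H, (if D' t' = true then 1 else 0) := by
          exact Finset.sum_congr rfl fun t' _ => inner t'
      _ = ∑ D' ∈ H, ∑ t' ∈ univ.filter (fun u => f u = i), (if D' t' = true then 1 else 0) :=
          Finset.sum_comm
      _ = ∑ D' ∈ H, b i := by
          refine Finset.sum_congr rfl fun D' hD' => ?_
          have hcf : ∑ t' ∈ univ.filter (fun u => f u = i), (if D' t' = true then 1 else 0)
              = ((univ.filter (fun u => f u = i)).filter (fun u => D' u = true)).card :=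
            (Finset.card_filter _ _).symm
          rw [hcf, Finset.filter_filter]
          have hmem : ∀ j ∈ Icc 1 ℓ, (univ.filter fun u => D' u = true ∧ f u = j).card = b j := by
            rw [hH] at hD'
            simp only [Finset.mem_filter, Finset.mem_univ, true_and] at hD'
            exact hD'
          rw [← hmem i hi]
          congr 1
          ext u
          simp [and_comm]
      _ = H.card * b i := by rw [Finset.sum_const, smul_eq_mul]
  have const : ∀ t' ∈ univ.filter (fun u => f u = i),
      ((univ.filter fun D' : Fin n → Bool =>
        (∀ j ∈ Icc 1 ℓ, (univ.filter fun u => D' u = true ∧ f u = j).card = b j)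
          ∧ D' t' = true)).card
      = ((univ.filter fun D' : Fin n → Bool =>
        (∀ j ∈ Icc 1 ℓ, (univ.filter fun u => D' u = true ∧ f u = j).card = b j)
          ∧ D' t = true)).card := by
    intro t' ht'
    have : f t' = i := by simpa using ht'
    exact swap_count n ℓ f b t' t (by rw [this, ht])
  rw [Finset.sum_congr rfl const, Finset.sum_const, hfib, smul_eq_mul] at key
  rw [key, Nat.mul_comm]

/-- Two-colour specialization of the main proposition: for a dealing method `f` of
`n = ℓs` cards with fibers of size `s` and a hand `b = (b_1,…,b_ℓ)` with `b_j ≤ s`,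
the sum of `Z(D',B,R)` over all arrangements `D'` realizing the hand `b` equals
`∏_j C(s, b_j) · Σ_i b_i (n + 1 - (2/s)Σ_t i_t)`. Positions are 1-indexed via `t+1`. -/
theorem sum_Z_over_hand (ℓ s : ℕ) (hs : 1 ≤ s) (f : Fin (ℓ * s) → ℕ)
    (hran : ∀ t, f t ∈ Icc 1 ℓ)
    (hfib : ∀ j ∈ Icc 1 ℓ, (univ.filter fun t => f t = j).card = s)
    (b : ℕ → ℕ) (hb : ∀ j ∈ Icc 1 ℓ, b j ≤ s) :
    (∑ D' ∈ univ.filter (fun D' : Fin (ℓ * s) → Bool =>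
        ∀ j ∈ Icc 1 ℓ, (univ.filter fun t => D' t = true ∧ f t = j).card = b j),
      (Zbool D' : ℚ))
      = (∏ j ∈ Icc 1 ℓ, (Nat.choose s (b j) : ℚ))
        * ∑ i ∈ Icc 1 ℓ, (b i : ℚ) *
            ((ℓ : ℚ) * s + 1
              - (2 / (s : ℚ)) * ∑ t ∈ univ.filter (fun t => f t = i), ((t : ℕ) + 1 : ℚ)) := by
  classical
  set H : Finset (Fin (ℓ*s) → Bool) := univ.filter (fun D' : Fin (ℓ*s) → Bool =>
      ∀ j ∈ Icc 1 ℓ, (univ.filter fun t => D' t = true ∧ f t = j).card = b j) with hH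
  have hs0 : (s:ℚ) ≠ 0 := Nat.cast_ne_zero.mpr (by omega)
  have hHcard : H.card = ∏ j ∈ Icc 1 ℓ, Nat.choose s (b j) := by
    rw [hH]; exact card_hand (ℓ*s) ℓ s f hran hfib b
  have step1 : (∑ D' ∈ H, (Zbool D' : ℚ))
      = ∑ t : Fin (ℓ*s), (((ℓ*s : ℕ):ℚ) + 1 - 2*(((t:ℕ):ℚ)+1))
          * ((H.filter fun D' => D' t = true).card : ℚ) := by
    rw [Finset.sum_congr rfl (fun D' _ => Zbool_eq D'), Finset.sum_comm]
    refine Finset.sum_congr rfl fun t _ => ?_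
    rw [← Finset.sum_filter, Finset.sum_const, nsmul_eq_mul, mul_comm]
  have hN : ∀ i ∈ Icc 1 ℓ, ∀ t ∈ univ.filter (fun u => f u = i),
      ((H.filter fun D' => D' t = true).card : ℚ) = (b i : ℚ) * (H.card : ℚ) / s := by
    intro i hi t ht
    have ht' : f t = i := by simpa using ht
    have h := N_formula (ℓ*s) ℓ s f b i hi (hfib i hi) t ht'
    have h2 : s * ((univ.filter fun D' : Fin (ℓ*s) → Bool =>
        (∀ j ∈ Icc 1 ℓ, (univ.filter fun u => D' u = true ∧ f u = j).card = b j)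
          ∧ D' t = true)).card = b i * H.card := by
      rw [hH]; exact h
    have hfil : H.filter (fun D' => D' t = true)
        = univ.filter (fun D' : Fin (ℓ*s) → Bool =>
            (∀ j ∈ Icc 1 ℓ, (univ.filter fun u => D' u = true ∧ f u = j).card = b j)
              ∧ D' t = true) := by
      rw [hH, Finset.filter_filter]
    rw [hfil, eq_div_iff hs0]
    have h3 := congrArg (fun x : ℕ => (x:ℚ)) h2
    push_cast at h3
    linear_combination h3
  calc (∑ D' ∈ H, (Zbool D' : ℚ))
      = ∑ t : Fin (ℓ*s), (((ℓ*s : ℕ):ℚ) + 1 - 2*(((t:ℕ):ℚ)+1))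
          * ((H.filter fun D' => D' t = true).card : ℚ) := step1
    _ = ∑ i ∈ Icc 1 ℓ, ∑ t ∈ univ.filter (fun u => f u = i),
          (((ℓ*s : ℕ):ℚ) + 1 - 2*(((t:ℕ):ℚ)+1))
            * ((H.filter fun D' => D' t = true).card : ℚ) :=
        (Finset.sum_fiberwise_of_maps_to (fun t _ => hran t) _).symm
    _ = ∑ i ∈ Icc 1 ℓ, (b i : ℚ) * (H.card : ℚ) *
          ((ℓ:ℚ)*s + 1 - (2/(s:ℚ)) * ∑ t ∈ univ.filter (fun u => f u = i), (((t:ℕ):ℚ)+1)) := by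
        refine Finset.sum_congr rfl fun i hi => ?_
        rw [Finset.sum_congr rfl (fun t ht => by rw [hN i hi t ht])]
        rw [← Finset.sum_mul]
        have hsum1 : ∑ t ∈ univ.filter (fun u => f u = i), ((((ℓ*s:ℕ)):ℚ) + 1 - 2*(((t:ℕ):ℚ)+1))
            = (s:ℚ) * (((ℓ*s:ℕ):ℚ) + 1)
              - 2 * ∑ t ∈ univ.filter (fun u => f u = i), (((t:ℕ):ℚ)+1) := by
          rw [Finset.sum_sub_distrib, Finset.sum_const, hfib i hi, ← Finset.mul_sum, nsmul_eq_mul]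
        rw [hsum1]
        have hc : ((ℓ*s : ℕ) : ℚ) = (ℓ:ℚ)*(s:ℚ) := by push_cast; ring
        rw [hc]
        field_simp
    _ = (∏ j ∈ Icc 1 ℓ, (Nat.choose s (b j) : ℚ))
        * ∑ i ∈ Icc 1 ℓ, (b i : ℚ) *
            ((ℓ : ℚ) * s + 1
              - (2 / (s : ℚ)) * ∑ t ∈ univ.filter (fun t => f t = i), ((t : ℕ) + 1 : ℚ)) := by
        rw [hHcard, Finset.mul_sum]
        refine Finset.sum_congr rfl fun i hi => ?_
        push_cast
        ring
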